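/- Let z ∈ ℝ^J, let u ∈ ℝ^J satisfy u_j ≥ 0 for all j and ∑_{j=1}^J u_j ≥ 1, let α⋆ = csparsemax(z; u), and define A = {j : 0 < α⋆_j < u_j} and A_R = {j : α⋆_j = u_j}. If A ≠ ∅ and τ ∈ ℝ is any constant with α⋆_j = max{0, min{u_j, z_j − τ}} for all j, then τ = (∑_{j∈A} z_j + ∑_{j∈A_R} u_j − 1) / |A|. -/

import Mathlib

open Finset in
/-- If `α⋆ = csparsemax(z; u)` has a nonempty set of free coordinates
`A = {j : 0 < α⋆_j < u_j}` and `τ` is a constant realizing the clamped form,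
then `τ = (∑_{j∈A} z_j + ∑_{j∈A_R} u_j − 1) / |A|`. -/
theorem csparsemax_tau_value (J : ℕ) (z u : Fin J → ℝ)
    (hu : ∀ j, 0 ≤ u j) (husum : 1 ≤ ∑ j, u j) (α : Fin J → ℝ)
    (hα : (∀ j, 0 ≤ α j) ∧ (∑ j, α j = 1) ∧ (∀ j, α j ≤ u j))
    (hmin : ∀ β : Fin J → ℝ,
      ((∀ j, 0 ≤ β j) ∧ (∑ j, β j = 1) ∧ (∀ j, β j ≤ u j)) →
        ∑ j, (α j - z j) ^ 2 ≤ ∑ j, (β j - z j) ^ 2)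
    (hA : (univ.filter (fun j => 0 < α j ∧ α j < u j)).Nonempty)
    (τ : ℝ) (hτ : ∀ j, α j = max 0 (min (u j) (z j - τ))) :
    τ = ((∑ j ∈ univ.filter (fun j => 0 < α j ∧ α j < u j), z j)
          + (∑ j ∈ univ.filter (fun j => α j = u j), u j) - 1)
        / (univ.filter (fun j => 0 < α j ∧ α j < u j)).card := by
  obtain ⟨hnn, hsum, hub⟩ := hα
  set A := univ.filter (fun j => 0 < α j ∧ α j < u j) with hAdef
  set R := univ.filter (fun j => α j = u j) with hRdef
  have hcardpos : 0 < A.card := Finset.card_pos.mpr hA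
  have hcard : (A.card : ℝ) ≠ 0 := by positivity
  -- on A, α j = z j - τ
  have hfree : ∀ j ∈ A, α j = z j - τ := by
    intro j hj
    rw [hAdef, Finset.mem_filter] at hj
    obtain ⟨-, h0, hlt⟩ := hj
    have ht := hτ j
    rcases le_or_gt (z j - τ) (u j) with h | h
    · rw [min_eq_right h] at ht
      rcases le_or_gt (z j - τ) 0 with h' | h'
      · rw [max_eq_left h'] at ht; linarith
      · rw [max_eq_right h'.le] at ht; exact ht
    · rw [min_eq_left h.le, max_eq_right (hu j)] at ht
      exact absurd ht (ne_of_lt hlt)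
  -- partition the sum
  have hsplit : ∑ j ∈ A, α j +
      ∑ j ∈ univ.filter (fun j => ¬(0 < α j ∧ α j < u j)), α j = 1 := by
    rw [hAdef, Finset.sum_filter_add_sum_filter_not]; exact hsum
  have hrest : ∑ j ∈ univ.filter (fun j => ¬(0 < α j ∧ α j < u j)), α j
      = ∑ j ∈ R, u j := by
    rw [show ∑ j ∈ univ.filter (fun j => ¬(0 < α j ∧ α j < u j)), α j
        = ∑ j ∈ univ.filter (fun j => ¬(0 < α j ∧ α j < u j)),
            (if α j = u j then u j else 0) from ?_]
    · rw [← Finset.sum_filter]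
      congr 1
      ext j
      simp only [hRdef, Finset.mem_filter, Finset.mem_univ, true_and]
      exact ⟨fun h => h.2, fun h => ⟨fun hc => (ne_of_lt hc.2) h, h⟩⟩
    · refine Finset.sum_congr rfl ?_
      intro j hj
      rw [Finset.mem_filter] at hj
      rcases hj.2 with h
      by_cases he : α j = u j
      · simp [he]
      · simp only [he, if_false]
        rcases lt_or_eq_of_le (hnn j) with h0 | h0
        · exact absurd ⟨h0, lt_of_le_of_ne (hub j) he⟩ h
        · exact h0.symm
  have hAzsum : ∑ j ∈ A, α j = ∑ j ∈ A, z j - A.card * τ := by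
    rw [Finset.sum_congr rfl hfree, Finset.sum_sub_distrib, Finset.sum_const,
      nsmul_eq_mul]
  have key : ∑ j ∈ A, z j - A.card * τ + ∑ j ∈ R, u j = 1 := by
    rw [← hAzsum, ← hrest]; exact hsplit
  field_simp
  linarith
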